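/- Let V be a finite-dimensional vector space over a finite field F. Then V can be written as a union of finitely many proper subspaces if and only if dim V ≥ 2, and when dim V ≥ 2, the minimal number of proper subspaces needed to cover V is |F| + 1. -/

import Mathlib

open Module Submodule in
private lemma count_aux' {F V : Type*} [Field F] [Fintype F] [AddCommGroup V] [Module F V]
    [FiniteDimensional F V] {C : Finset (Submodule F V)}
    (h1 : ∀ W ∈ C, W ≠ ⊤) (h2 : ∀ v : V, ∃ W ∈ C, v ∈ W) :
    Fintype.card F ^ finrank F V - 1 ≤
      C.card * (Fintype.card F ^ (finrank F V - 1) - 1) := by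
  classical
  have : Finite V := Module.finite_of_finite F
  have : Fintype V := Fintype.ofFinite V
  have hcardV : Fintype.card V = Fintype.card F ^ finrank F V := card_eq_pow_finrank
  have hW : ∀ W ∈ C, ((W : Set V).toFinset.erase 0).card ≤
      Fintype.card F ^ (finrank F V - 1) - 1 := by
    intro W hWC
    have hne := h1 W hWC
    have hlt : finrank F W < finrank F V := Submodule.finrank_lt hne
    have hcW : Fintype.card W = Fintype.card F ^ finrank F W := card_eq_pow_finrank
    have h1' : (W : Set V).toFinset.card = Fintype.card W := Set.toFinset_card _
    rw [Finset.card_erase_of_mem (by simp [W.zero_mem]), h1', hcW]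
    have : Fintype.card F ^ finrank F W ≤ Fintype.card F ^ (finrank F V - 1) :=
      Nat.pow_le_pow_right Fintype.card_pos (by omega)
    omega
  have hsub : (Finset.univ.erase (0 : V)) ⊆
      C.biUnion (fun W => (W : Set V).toFinset.erase 0) := by
    intro v hv
    obtain ⟨W, hWC, hvW⟩ := h2 v
    simp only [Finset.mem_erase, Finset.mem_univ, and_true] at hv
    exact Finset.mem_biUnion.2 ⟨W, hWC, by simp [hv, hvW]⟩
  have hle := Finset.card_le_card hsub
  have hbu := Finset.card_biUnion_le (s := C) (t := fun W => (W : Set V).toFinset.erase 0)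
  have h3 : ∑ W ∈ C, ((W : Set V).toFinset.erase 0).card ≤
      C.card * (Fintype.card F ^ (finrank F V - 1) - 1) := by
    rw [Finset.card_eq_sum_ones C, Finset.sum_mul]
    simp only [one_mul]
    exact Finset.sum_le_sum hW
  have h4 : (Finset.univ.erase (0 : V)).card = Fintype.card V - 1 := by
    rw [Finset.card_erase_of_mem (Finset.mem_univ _), Finset.card_univ]
  omega

/-- A cover of a vector space by proper subspaces. -/
def IsSubspaceCover (F V : Type*) [Field F] [AddCommGroup V] [Module F V]
    (C : Finset (Submodule F V)) : Prop :=
  (∀ W ∈ C, W ≠ ⊤) ∧ ∀ v : V, ∃ W ∈ C, v ∈ W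

open Module Submodule in
private lemma exists_cover' {F V : Type*} [Field F] [Fintype F] [AddCommGroup V] [Module F V]
    [FiniteDimensional F V] (hd : 2 ≤ finrank F V) :
    ∃ C : Finset (Submodule F V), IsSubspaceCover F V C ∧ C.card = Fintype.card F + 1 := by
  classical
  set d := finrank F V with hdd
  let b : Basis (Fin d) F V := Module.finBasis F V
  let i0 : Fin d := ⟨0, by omega⟩
  let i1 : Fin d := ⟨1, by omega⟩
  let f : V →ₗ[F] F × F := (b.coord i0).prod (b.coord i1)
  have hf : Function.Surjective f := by
    rintro ⟨x, y⟩
    refine ⟨x • b i0 + y • b i1, ?_⟩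
    have h01 : i0 ≠ i1 := by simp [i0, i1, Fin.ext_iff]
    simp [f, LinearMap.prod_apply, Basis.coord_apply, map_add, map_smul,
      Basis.repr_self, Finsupp.single_apply, h01, h01.symm, Prod.ext_iff]
  let L : F → Submodule F (F × F) := fun a => span F {((1 : F), a)}
  let Li : Submodule F (F × F) := span F {((0 : F), (1 : F))}
  have hmem : ∀ a x y : F, (x, y) ∈ L a ↔ y = x * a := by
    intro a x y
    simp only [L, mem_span_singleton, Prod.smul_mk, smul_eq_mul, mul_one, Prod.mk.injEq]
    constructor
    · rintro ⟨c, rfl, rfl⟩; ring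
    · rintro rfl; exact ⟨x, rfl, rfl⟩
  have hmemi : ∀ x y : F, (x, y) ∈ Li ↔ x = 0 := by
    intro x y
    simp only [Li, mem_span_singleton, Prod.smul_mk, smul_eq_mul, mul_one, mul_zero,
      Prod.mk.injEq]
    constructor
    · rintro ⟨c, rfl, rfl⟩; rfl
    · rintro rfl; exact ⟨y, rfl, rfl⟩
  have hLprop : ∀ a, L a ≠ ⊤ := by
    intro a h
    have : ((0 : F), (1 : F)) ∈ L a := h ▸ mem_top
    rw [hmem] at this; simp at this
  have hLiprop : Li ≠ ⊤ := by
    intro h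
    have : ((1 : F), (0 : F)) ∈ Li := h ▸ mem_top
    rw [hmemi] at this; simp at this
  have hLinj : Function.Injective L := by
    intro a c h
    have : ((1 : F), c) ∈ L a := by rw [h, hmem]; simp
    rw [hmem] at this; simpa using this.symm
  have hLne : ∀ a, L a ≠ Li := by
    intro a h
    have : ((1 : F), a) ∈ Li := by rw [← h, hmem]; simp
    rw [hmemi] at this; simp at this
  have hcomap_ne : ∀ W : Submodule F (F × F), W ≠ ⊤ → comap f W ≠ ⊤ := by
    intro W hW h
    apply hW
    have := congrArg (Submodule.map f) h
    rwa [Submodule.map_comap_eq_of_surjective hf, Submodule.map_top,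
      LinearMap.range_eq_top.2 hf] at this
  have hcomap_inj : Function.Injective (Submodule.comap f) :=
    Submodule.comap_injective_of_surjective hf
  refine ⟨insert (comap f Li) (Finset.univ.image fun a => comap f (L a)), ⟨?_, ?_⟩, ?_⟩
  · intro W hW
    rcases Finset.mem_insert.1 hW with rfl | hW
    · exact hcomap_ne _ hLiprop
    · obtain ⟨a, -, rfl⟩ := Finset.mem_image.1 hW
      exact hcomap_ne _ (hLprop a)
  · intro v
    by_cases hx : (f v).1 = 0
    · refine ⟨comap f Li, Finset.mem_insert_self _ _, ?_⟩
      simp only [mem_comap]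
      rw [show f v = ((f v).1, (f v).2) from rfl, hmemi]
      exact hx
    · refine ⟨comap f (L ((f v).1⁻¹ * (f v).2)), Finset.mem_insert.2 (Or.inr
        (Finset.mem_image.2 ⟨_, Finset.mem_univ _, rfl⟩)), ?_⟩
      simp only [mem_comap]
      rw [show f v = ((f v).1, (f v).2) from rfl, hmem]
      field_simp
  · rw [Finset.card_insert_of_notMem, Finset.card_image_of_injective _
      (fun a c h => hLinj (hcomap_inj h)), Finset.card_univ]
    intro h
    obtain ⟨a, -, ha⟩ := Finset.mem_image.1 h
    exact hLne a (hcomap_inj ha)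

/-- A finite-dimensional vector space over a finite field is a finite union of
proper subspaces iff its dimension is at least `2`, in which case the minimal
number of proper subspaces needed is `|F| + 1`. -/
theorem stmt_10 (F V : Type*) [Field F] [Fintype F] [AddCommGroup V] [Module F V]
    [FiniteDimensional F V] :
    ((∃ C : Finset (Submodule F V), IsSubspaceCover F V C) ↔ 2 ≤ Module.finrank F V) ∧
      (2 ≤ Module.finrank F V →
        IsLeast {n : ℕ | ∃ C : Finset (Submodule F V), IsSubspaceCover F V C ∧ C.card = n}
          (Fintype.card F + 1)) := by
  have hq : 2 ≤ Fintype.card F := Fintype.one_lt_card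
  have lower : ∀ (C : Finset (Submodule F V)), IsSubspaceCover F V C →
      2 ≤ Module.finrank F V → Fintype.card F + 1 ≤ C.card := by
    intro C hC hd
    by_contra hn
    push_neg at hn
    have hcount := count_aux' hC.1 hC.2
    set q := Fintype.card F
    set d := Module.finrank F V
    have h1 : C.card * (q ^ (d - 1) - 1) ≤ q * (q ^ (d - 1) - 1) :=
      Nat.mul_le_mul_right _ (by omega)
    have hqd : q ^ d = q * q ^ (d - 1) := by
      conv_lhs => rw [show d = 1 + (d - 1) by omega, pow_add, pow_one]
    have hq1 : 1 ≤ q ^ (d - 1) := Nat.one_le_pow _ _ (by omega)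
    have : q * (q ^ (d - 1) - 1) = q ^ d - q := by rw [Nat.mul_sub, hqd]; ring_nf
    have hqle : q ≤ q ^ d := Nat.le_self_pow (by omega) q
    omega
  constructor
  · constructor
    · rintro ⟨C, hC⟩
      by_contra hd
      push_neg at hd
      interval_cases h : Module.finrank F V
      · -- finrank = 0
        have hsub : Subsingleton V := by
          rw [← Module.finrank_zero_iff (R := F)]; omega
        obtain ⟨W, hWC, -⟩ := hC.2 0
        exact hC.1 W hWC (by ext v; simp [Subsingleton.elim v 0, W.zero_mem])
      · -- finrank = 1
        have hcount := count_aux' hC.1 hC.2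
        rw [h] at hcount
        simp at hcount
        omega
    · intro hd
      obtain ⟨C, hC, -⟩ := exists_cover' hd
      exact ⟨C, hC⟩
  · intro hd
    constructor
    · obtain ⟨C, hC, hcard⟩ := exists_cover' hd
      exact ⟨C, hC, hcard⟩
    · rintro n ⟨C, hC, rfl⟩
      exact lower C hC hd
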